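/- Assume A := ∫_G c(g)^{1/2} δ_λ(g)² dπ(g) < ∞ and B := ∫_G δ_λ(g)² dπ(g) < ∞. Then for every t ∈ ℝ, Q(t) maps L₁ into L₁, and for every f ∈ L₁ one has m₁(Q(t)f) ≤ A m₁(f) + 2 A C^{1/2} |t|^{1/2} |f|₁ and |Q(t)f|₁ ≤ B |f|₁. -/

import Mathlib

open MeasureTheory

private lemma sqrt_add_le' {a b : ℝ} (ha : 0 ≤ a) (hb : 0 ≤ b) :
    Real.sqrt (a + b) ≤ Real.sqrt a + Real.sqrt b := by
  rw [show Real.sqrt a + Real.sqrt b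
      = Real.sqrt ((Real.sqrt a + Real.sqrt b) ^ 2) from
    (Real.sqrt_sq (by positivity)).symm]
  apply Real.sqrt_le_sqrt
  nlinarith [Real.sq_sqrt ha, Real.sq_sqrt hb, Real.sqrt_nonneg a, Real.sqrt_nonneg b]

private lemma norm_exp_I_mul_sub_one (x : ℝ) :
    ‖Complex.exp ((x : ℂ) * Complex.I) - 1‖ ≤ |x| := by
  have hre : (Complex.exp ((x : ℂ) * Complex.I) - 1).re = Real.cos x - 1 := by
    simp [Complex.exp_ofReal_mul_I_re]
  have him : (Complex.exp ((x : ℂ) * Complex.I) - 1).im = Real.sin x := by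
    simp [Complex.exp_ofReal_mul_I_im]
  have hn : ‖Complex.exp ((x : ℂ) * Complex.I) - 1‖
      = Real.sqrt ((Real.cos x - 1) ^ 2 + Real.sin x ^ 2) := by
    rw [Complex.norm_def, Complex.normSq_apply, hre, him]
    ring_nf
  rw [hn]
  have h1 : (Real.cos x - 1) ^ 2 + Real.sin x ^ 2 = 4 * ((1 - Real.cos x) / 2) := by
    nlinarith [Real.sin_sq_add_cos_sq x]
  rw [h1, show (4 : ℝ) * ((1 - Real.cos x) / 2) = 2 ^ 2 * ((1 - Real.cos x) / 2) by ring,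
    Real.sqrt_mul (by positivity), Real.sqrt_sq (by norm_num), ← Real.abs_sin_half]
  calc 2 * |Real.sin (x / 2)| ≤ 2 * |x / 2| := by
        have := Real.abs_sin_le_abs (x := x / 2)
        linarith
    _ = |x| := by rw [abs_div]; ring_nf

private lemma norm_exp_I_sub_exp_I (t r s : ℝ) :
    ‖Complex.exp (Complex.I * t * r) - Complex.exp (Complex.I * t * s)‖
      ≤ min 2 (|t| * |r - s|) := by
  have key : ∀ a : ℝ, Complex.exp (Complex.I * a) = Complex.exp ((a : ℂ) * Complex.I) := by
    intro a; ring_nf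
  apply le_min
  · calc ‖Complex.exp (Complex.I * t * r) - Complex.exp (Complex.I * t * s)‖
        ≤ ‖Complex.exp (Complex.I * t * r)‖ + ‖Complex.exp (Complex.I * t * s)‖ :=
          norm_sub_le _ _
      _ = 2 := by
          rw [show Complex.I * (t : ℂ) * (r : ℂ) = ((t * r : ℝ) : ℂ) * Complex.I by
                push_cast; ring,
              show Complex.I * (t : ℂ) * (s : ℂ) = ((t * s : ℝ) : ℂ) * Complex.I by
                push_cast; ring,
              Complex.norm_exp_ofReal_mul_I,
              Complex.norm_exp_ofReal_mul_I]
          norm_num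
  · have hfac : Complex.exp (Complex.I * t * r) - Complex.exp (Complex.I * t * s)
        = Complex.exp (((t * s : ℝ) : ℂ) * Complex.I)
            * (Complex.exp (((t * r - t * s : ℝ) : ℂ) * Complex.I) - 1) := by
      rw [mul_sub, ← Complex.exp_add, mul_one]
      push_cast
      ring_nf
    rw [hfac, norm_mul, Complex.norm_exp_ofReal_mul_I, one_mul]
    calc ‖Complex.exp (((t * r - t * s : ℝ) : ℂ) * Complex.I) - 1‖
        ≤ |t * r - t * s| := norm_exp_I_mul_sub_one _
      _ = |t| * |r - s| := by rw [← abs_mul]; ring_nf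

private lemma min_two_le_sqrt {z : ℝ} (hz : 0 ≤ z) :
    min 2 z ≤ Real.sqrt 2 * Real.sqrt z := by
  rw [← Real.sqrt_mul (by norm_num)]
  rcases le_total z 2 with h | h
  · rw [min_eq_right h]
    rw [Real.le_sqrt hz (by positivity)]
    nlinarith
  · rw [min_eq_left h]
    rw [Real.le_sqrt (by norm_num) (by linarith)]
    nlinarith

/-- Lemma 3.2 of the paper (first part): the Fourier kernel `Q(t)` maps `L₁` into `L₁`,
with `m₁(Q(t)f) ≤ A m₁(f) + 2 A C^{1/2} |t|^{1/2} |f|₁` and `|Q(t)f|₁ ≤ B |f|₁`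
(stated via arbitrary admissible bounds `M₁ ≥ m₁(f)` and `M₂ ≥ |f|₁`). -/
theorem stmt_11
    {E : Type*} [MetricSpace E] [MeasurableSpace E] [BorelSpace E]
    (hballs : ∀ (x : E) (r : ℝ), IsCompact (Metric.closedBall x r))
    (x₀ : E)
    -- the Lipschitz transformations of `E`
    {G : Type*} [MeasurableSpace G]
    (act : G → E → E) (hact : Measurable fun p : G × E => act p.1 p.2)
    (c : G → ℝ) (hc0 : ∀ g, 0 ≤ c g)
    (hcLip : ∀ g x y, dist (act g x) (act g y) ≤ c g * dist x y)
    (hcLeast : ∀ g r, 0 ≤ r → (∀ x y, dist (act g x) (act g y) ≤ r * dist x y) → c g ≤ r)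
    (π : Measure G) [IsProbabilityMeasure π]
    -- the Lipschitz function `ξ` and the Fourier kernels `Q(t)`
    (ξ : E → ℝ) (C : ℝ) (hC : 0 ≤ C) (hξLip : ∀ x y, |ξ x - ξ y| ≤ C * dist x y)
    (Qt : ℝ → (E → ℂ) → E → ℂ)
    (hQt : ∀ t f x, Qt t f x = ∫ g, Complex.exp (Complex.I * t * ξ (act g x)) * f (act g x) ∂π)
    -- the weights `p_λ` and `δ_λ`
    (lam : ℝ) (hlam0 : 0 < lam) (hlam1 : lam ≤ 1)
    (pl : E → ℝ) (hpl : ∀ x, pl x = 1 + lam * Real.sqrt (dist x x₀))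
    (δ : G → ℝ) (hδ : ∀ g, δ g = Real.sqrt (max (c g) 1) + lam * Real.sqrt (dist (act g x₀) x₀))
    -- the constants `A` and `B`, assumed finite
    (A B : ℝ)
    (hAint : Integrable (fun g => Real.sqrt (c g) * δ g ^ 2) π)
    (hA : A = ∫ g, Real.sqrt (c g) * δ g ^ 2 ∂π)
    (hBint : Integrable (fun g => δ g ^ 2) π)
    (hB : B = ∫ g, δ g ^ 2 ∂π) :
    ∀ t : ℝ, ∀ f : E → ℂ, ∀ M₁ M₂ : ℝ,
      (∀ x y, ‖f x - f y‖ ≤ M₁ * Real.sqrt (dist x y) * pl x * pl y) →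
      (∀ x, ‖f x‖ ≤ M₂ * pl x ^ 2) →
      (∀ x y, ‖Qt t f x - Qt t f y‖ ≤
          (A * M₁ + 2 * A * Real.sqrt C * Real.sqrt |t| * M₂) *
            Real.sqrt (dist x y) * pl x * pl y) ∧
      (∀ x, ‖Qt t f x‖ ≤ B * M₂ * pl x ^ 2) := by
  intro t f M₁ M₂ hm hb
  -- basic positivity facts
  have hpl1 : ∀ x, 1 ≤ pl x := by
    intro x; rw [hpl]
    nlinarith [Real.sqrt_nonneg (dist x x₀), hlam0.le]
  have hpl0 : ∀ x, 0 < pl x := fun x => lt_of_lt_of_le one_pos (hpl1 x)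
  have hδ1 : ∀ g, 1 ≤ δ g := by
    intro g; rw [hδ]
    have h1 : (1 : ℝ) ≤ Real.sqrt (max (c g) 1) :=
      Real.one_le_sqrt.2 (le_max_right _ _)
    nlinarith [Real.sqrt_nonneg (dist (act g x₀) x₀), hlam0.le]
  have hδ0 : ∀ g, 0 ≤ δ g := fun g => le_trans zero_le_one (hδ1 g)
  have hM₂ : 0 ≤ M₂ := by
    have h := hb x₀
    nlinarith [norm_nonneg (f x₀), pow_pos (hpl0 x₀) 2, h]
  -- the key weight inequality `pl (act g x) ≤ δ g * pl x`
  have hplδ : ∀ g x, pl (act g x) ≤ δ g * pl x := by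
    intro g x
    have hd : dist (act g x) x₀ ≤ c g * dist x x₀ + dist (act g x₀) x₀ :=
      (dist_triangle (act g x) (act g x₀) x₀).trans
        (add_le_add (hcLip g x x₀) le_rfl)
    have hs : Real.sqrt (dist (act g x) x₀)
        ≤ Real.sqrt (c g) * Real.sqrt (dist x x₀) + Real.sqrt (dist (act g x₀) x₀) := by
      calc Real.sqrt (dist (act g x) x₀)
          ≤ Real.sqrt (c g * dist x x₀ + dist (act g x₀) x₀) := Real.sqrt_le_sqrt hd
        _ ≤ Real.sqrt (c g * dist x x₀) + Real.sqrt (dist (act g x₀) x₀) :=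
            sqrt_add_le' (mul_nonneg (hc0 g) dist_nonneg) dist_nonneg
        _ = Real.sqrt (c g) * Real.sqrt (dist x x₀) + Real.sqrt (dist (act g x₀) x₀) := by
            rw [Real.sqrt_mul (hc0 g)]
    rw [hpl, hpl, hδ]
    have hm1 : (1 : ℝ) ≤ Real.sqrt (max (c g) 1) := Real.one_le_sqrt.2 (le_max_right _ _)
    have hmc : Real.sqrt (c g) ≤ Real.sqrt (max (c g) 1) :=
      Real.sqrt_le_sqrt (le_max_left _ _)
    nlinarith [Real.sqrt_nonneg (dist x x₀), Real.sqrt_nonneg (dist (act g x₀) x₀),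
      Real.sqrt_nonneg (c g), hlam0.le, hs,
      mul_nonneg (mul_nonneg hlam0.le (sub_nonneg.2 hmc)) (Real.sqrt_nonneg (dist x x₀)),
      mul_nonneg (mul_nonneg (mul_nonneg hlam0.le hlam0.le)
        (Real.sqrt_nonneg (dist (act g x₀) x₀))) (Real.sqrt_nonneg (dist x x₀))]
  -- continuity / measurability
  have hplc : Continuous pl := by
    have : pl = fun x => 1 + lam * Real.sqrt (dist x x₀) := funext hpl
    rw [this]
    exact continuous_const.add (continuous_const.mul
      (Real.continuous_sqrt.comp (continuous_id.dist continuous_const)))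
  set M₁' : ℝ := max M₁ 0 with hM₁'def
  have hM₁'0 : 0 ≤ M₁' := le_max_right _ _
  have hm' : ∀ x y, ‖f x - f y‖ ≤ M₁' * Real.sqrt (dist x y) * pl x * pl y := by
    intro x y
    refine (hm x y).trans ?_
    have : M₁ ≤ M₁' := le_max_left _ _
    have h1 : 0 ≤ Real.sqrt (dist x y) * pl x * pl y :=
      mul_nonneg (mul_nonneg (Real.sqrt_nonneg _) (hpl0 x).le) (hpl0 y).le
    nlinarith [this, h1]
  have hfc : Continuous f := by
    rw [continuous_iff_continuousAt]
    intro x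
    have hten : Filter.Tendsto (fun y => ‖f y - f x‖) (nhds x) (nhds 0) := by
      apply squeeze_zero (fun y => norm_nonneg _) (fun y => hm' y x)
      have hcont : Continuous (fun y => M₁' * Real.sqrt (dist y x) * pl y * pl x) :=
        ((continuous_const.mul
          (Real.continuous_sqrt.comp (continuous_id.dist continuous_const))).mul hplc).mul
          continuous_const
      have h0 := hcont.tendsto x
      simpa using h0
    exact tendsto_iff_norm_sub_tendsto_zero.mpr hten
  have hξc : Continuous ξ := by
    have : LipschitzWith ⟨C, hC⟩ ξ := by
      apply LipschitzWith.of_dist_le_mul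
      intro x y
      rw [Real.dist_eq]
      exact hξLip x y
    exact this.continuous
  have hax : ∀ x : E, Measurable (fun g => act g x) := fun x =>
    hact.comp (measurable_id.prodMk measurable_const)
  have hexp1 : ∀ r : ℝ, ‖Complex.exp (Complex.I * t * r)‖ = 1 := by
    intro r
    rw [show Complex.I * (t : ℂ) * (r : ℂ) = ((t * r : ℝ) : ℂ) * Complex.I by push_cast; ring,
      Complex.norm_exp_ofReal_mul_I]
  -- integrability of the integrand
  have hFi : ∀ x : E, Integrable
      (fun g => Complex.exp (Complex.I * t * ξ (act g x)) * f (act g x)) π := by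
    intro x
    apply Integrable.mono' (hBint.const_mul (M₂ * pl x ^ 2))
    · apply Measurable.aestronglyMeasurable
      apply Measurable.mul
      · exact Complex.measurable_exp.comp
          ((measurable_const.mul (Complex.measurable_ofReal.comp
            (hξc.measurable.comp (hax x)))))
      · exact hfc.measurable.comp (hax x)
    · filter_upwards with g
      rw [norm_mul, hexp1, one_mul]
      calc ‖f (act g x)‖ ≤ M₂ * pl (act g x) ^ 2 := hb _
        _ ≤ M₂ * (δ g * pl x) ^ 2 :=
            mul_le_mul_of_nonneg_left (pow_le_pow_left₀ (hpl0 _).le (hplδ g x) 2) hM₂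
        _ = M₂ * pl x ^ 2 * δ g ^ 2 := by ring
  -- the second claim
  have claim2 : ∀ x, ‖Qt t f x‖ ≤ B * M₂ * pl x ^ 2 := by
    intro x
    rw [hQt]
    calc ‖∫ g, Complex.exp (Complex.I * t * ξ (act g x)) * f (act g x) ∂π‖
        ≤ ∫ g, M₂ * pl x ^ 2 * δ g ^ 2 ∂π := by
          apply norm_integral_le_of_norm_le (hBint.const_mul (M₂ * pl x ^ 2))
          filter_upwards with g
          rw [norm_mul, hexp1, one_mul]
          calc ‖f (act g x)‖ ≤ M₂ * pl (act g x) ^ 2 := hb _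
            _ ≤ M₂ * (δ g * pl x) ^ 2 :=
                mul_le_mul_of_nonneg_left (pow_le_pow_left₀ (hpl0 _).le (hplδ g x) 2) hM₂
            _ = M₂ * pl x ^ 2 * δ g ^ 2 := by ring
      _ = M₂ * pl x ^ 2 * ∫ g, δ g ^ 2 ∂π := integral_const_mul _ _
      _ = B * M₂ * pl x ^ 2 := by rw [← hB]; ring
  -- the first claim, for `pl y ≤ pl x`
  have key : ∀ x y, pl y ≤ pl x →
      ‖Qt t f x - Qt t f y‖ ≤
        (A * M₁ + 2 * A * Real.sqrt C * Real.sqrt |t| * M₂) *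
          Real.sqrt (dist x y) * pl x * pl y := by
    intro x y hxy
    by_cases hxyeq : x = y
    · subst hxyeq
      simp [dist_self]
    · have hd0 : 0 < dist x y := dist_pos.2 hxyeq
      have hM₁ : 0 ≤ M₁ := by
        have h := hm x y
        nlinarith [norm_nonneg (f x - f y), Real.sqrt_pos.2 hd0, hpl0 x, hpl0 y,
          mul_pos (mul_pos (Real.sqrt_pos.2 hd0) (hpl0 x)) (hpl0 y)]
      rw [hQt, hQt, ← integral_sub (hFi x) (hFi y)]
      set K : ℝ := (M₁ + 2 * Real.sqrt C * Real.sqrt |t| * M₂) *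
        Real.sqrt (dist x y) * pl x * pl y with hK
      have hbound : ∀ g,
          ‖Complex.exp (Complex.I * t * ξ (act g x)) * f (act g x) -
            Complex.exp (Complex.I * t * ξ (act g y)) * f (act g y)‖
            ≤ Real.sqrt (c g) * δ g ^ 2 * K := by
        intro g
        have hdg : dist (act g x) (act g y) ≤ c g * dist x y := hcLip g x y
        have hsg : Real.sqrt (dist (act g x) (act g y))
            ≤ Real.sqrt (c g) * Real.sqrt (dist x y) := by
          calc Real.sqrt (dist (act g x) (act g y))
              ≤ Real.sqrt (c g * dist x y) := Real.sqrt_le_sqrt hdg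
            _ = Real.sqrt (c g) * Real.sqrt (dist x y) := Real.sqrt_mul (hc0 g) _
        -- term 1 bound
        have ht1 : ‖f (act g x) - f (act g y)‖
            ≤ M₁ * (Real.sqrt (c g) * δ g ^ 2) * Real.sqrt (dist x y) * pl x * pl y := by
          calc ‖f (act g x) - f (act g y)‖
              ≤ M₁ * Real.sqrt (dist (act g x) (act g y)) * pl (act g x) * pl (act g y) :=
                hm _ _
            _ ≤ M₁ * (Real.sqrt (c g) * Real.sqrt (dist x y)) * (δ g * pl x) * (δ g * pl y) := by
                have h1 := hplδ g x
                have h2 := hplδ g y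
                have h3 := Real.sqrt_nonneg (dist (act g x) (act g y))
                have h4 := (hpl0 (act g x)).le
                have h5 := (hpl0 (act g y)).le
                have h6 := (hpl0 x).le
                have h7 := (hpl0 y).le
                have h8 := hδ0 g
                have h9 := Real.sqrt_nonneg (c g)
                have h10 := Real.sqrt_nonneg (dist x y)
                have step1 : M₁ * Real.sqrt (dist (act g x) (act g y)) * pl (act g x) *
                    pl (act g y) ≤ M₁ * (Real.sqrt (c g) * Real.sqrt (dist x y)) *
                      pl (act g x) * pl (act g y) := by
                  apply mul_le_mul_of_nonneg_right _ h5
                  apply mul_le_mul_of_nonneg_right _ h4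
                  exact mul_le_mul_of_nonneg_left hsg hM₁
                have step2 : M₁ * (Real.sqrt (c g) * Real.sqrt (dist x y)) *
                    pl (act g x) * pl (act g y) ≤ M₁ * (Real.sqrt (c g) * Real.sqrt (dist x y)) *
                      (δ g * pl x) * (δ g * pl y) := by
                  have hnn : 0 ≤ M₁ * (Real.sqrt (c g) * Real.sqrt (dist x y)) :=
                    mul_nonneg hM₁ (mul_nonneg (Real.sqrt_nonneg _) (Real.sqrt_nonneg _))
                  have := mul_le_mul h1 h2 h5 (mul_nonneg h8 h6)
                  calc M₁ * (Real.sqrt (c g) * Real.sqrt (dist x y)) * pl (act g x) *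
                        pl (act g y)
                      = M₁ * (Real.sqrt (c g) * Real.sqrt (dist x y)) *
                          (pl (act g x) * pl (act g y)) := by ring
                    _ ≤ M₁ * (Real.sqrt (c g) * Real.sqrt (dist x y)) *
                          (δ g * pl x * (δ g * pl y)) :=
                        mul_le_mul_of_nonneg_left this hnn
                    _ = M₁ * (Real.sqrt (c g) * Real.sqrt (dist x y)) *
                          (δ g * pl x) * (δ g * pl y) := by ring
                exact step1.trans step2
            _ = M₁ * (Real.sqrt (c g) * δ g ^ 2) * Real.sqrt (dist x y) * pl x * pl y := by
                ring
        -- term 2 bound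
        have ht2 : ‖Complex.exp (Complex.I * t * ξ (act g x)) -
            Complex.exp (Complex.I * t * ξ (act g y))‖ * ‖f (act g y)‖
            ≤ 2 * Real.sqrt C * Real.sqrt |t| * M₂ *
              (Real.sqrt (c g) * δ g ^ 2) * Real.sqrt (dist x y) * pl x * pl y := by
          have he : ‖Complex.exp (Complex.I * t * ξ (act g x)) -
              Complex.exp (Complex.I * t * ξ (act g y))‖
              ≤ 2 * (Real.sqrt |t| * Real.sqrt C * Real.sqrt (c g) * Real.sqrt (dist x y)) := by
            have h1 := norm_exp_I_sub_exp_I t (ξ (act g x)) (ξ (act g y))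
            have h2 : |t| * |ξ (act g x) - ξ (act g y)| ≤ |t| * (C * (c g * dist x y)) := by
              apply mul_le_mul_of_nonneg_left _ (abs_nonneg t)
              exact (hξLip _ _).trans (mul_le_mul_of_nonneg_left hdg hC)
            have h3 : min 2 (|t| * |ξ (act g x) - ξ (act g y)|)
                ≤ min 2 (|t| * (C * (c g * dist x y))) :=
              min_le_min le_rfl h2
            have h4 : min 2 (|t| * (C * (c g * dist x y)))
                ≤ Real.sqrt 2 * Real.sqrt (|t| * (C * (c g * dist x y))) :=
              min_two_le_sqrt (mul_nonneg (abs_nonneg t) (mul_nonneg hC (mul_nonneg (hc0 g) dist_nonneg)))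
            have h5 : Real.sqrt (|t| * (C * (c g * dist x y)))
                = Real.sqrt |t| * Real.sqrt C * Real.sqrt (c g) * Real.sqrt (dist x y) := by
              rw [Real.sqrt_mul (abs_nonneg t), Real.sqrt_mul hC, Real.sqrt_mul (hc0 g)]
              ring
            have h6 : Real.sqrt 2 ≤ 2 := by
              nlinarith [Real.sq_sqrt (by norm_num : (0:ℝ) ≤ 2), Real.sqrt_nonneg 2]
            have h7 : 0 ≤ Real.sqrt (|t| * (C * (c g * dist x y))) := Real.sqrt_nonneg _
            calc ‖Complex.exp (Complex.I * t * ξ (act g x)) -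
                Complex.exp (Complex.I * t * ξ (act g y))‖
                ≤ min 2 (|t| * (C * (c g * dist x y))) := h1.trans h3
              _ ≤ Real.sqrt 2 * Real.sqrt (|t| * (C * (c g * dist x y))) := h4
              _ ≤ 2 * Real.sqrt (|t| * (C * (c g * dist x y))) :=
                  mul_le_mul_of_nonneg_right h6 h7
              _ = 2 * (Real.sqrt |t| * Real.sqrt C * Real.sqrt (c g) * Real.sqrt (dist x y)) := by
                  rw [h5]
          have hfy : ‖f (act g y)‖ ≤ M₂ * δ g ^ 2 * pl x * pl y := by
            calc ‖f (act g y)‖ ≤ M₂ * pl (act g y) ^ 2 := hb _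
              _ ≤ M₂ * (δ g * pl y) ^ 2 :=
                  mul_le_mul_of_nonneg_left (pow_le_pow_left₀ (hpl0 _).le (hplδ g y) 2) hM₂
              _ = M₂ * δ g ^ 2 * pl y * pl y := by ring
              _ ≤ M₂ * δ g ^ 2 * pl x * pl y := by
                  have h0 : 0 ≤ M₂ * δ g ^ 2 := mul_nonneg hM₂ (sq_nonneg _)
                  exact mul_le_mul_of_nonneg_right
                    (mul_le_mul_of_nonneg_left hxy h0) (hpl0 y).le
          calc ‖Complex.exp (Complex.I * t * ξ (act g x)) -
              Complex.exp (Complex.I * t * ξ (act g y))‖ * ‖f (act g y)‖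
              ≤ (2 * (Real.sqrt |t| * Real.sqrt C * Real.sqrt (c g) * Real.sqrt (dist x y))) *
                  (M₂ * δ g ^ 2 * pl x * pl y) := by
                apply mul_le_mul he hfy (norm_nonneg _) (by positivity)
            _ = 2 * Real.sqrt C * Real.sqrt |t| * M₂ *
                  (Real.sqrt (c g) * δ g ^ 2) * Real.sqrt (dist x y) * pl x * pl y := by
                ring
        -- combine
        have hsplit : Complex.exp (Complex.I * t * ξ (act g x)) * f (act g x) -
            Complex.exp (Complex.I * t * ξ (act g y)) * f (act g y)
            = Complex.exp (Complex.I * t * ξ (act g x)) * (f (act g x) - f (act g y)) +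
              (Complex.exp (Complex.I * t * ξ (act g x)) -
                Complex.exp (Complex.I * t * ξ (act g y))) * f (act g y) := by
          ring
        calc ‖Complex.exp (Complex.I * t * ξ (act g x)) * f (act g x) -
            Complex.exp (Complex.I * t * ξ (act g y)) * f (act g y)‖
            ≤ ‖Complex.exp (Complex.I * t * ξ (act g x)) * (f (act g x) - f (act g y))‖ +
              ‖(Complex.exp (Complex.I * t * ξ (act g x)) -
                Complex.exp (Complex.I * t * ξ (act g y))) * f (act g y)‖ := by
              rw [hsplit]; exact norm_add_le _ _
          _ = ‖f (act g x) - f (act g y)‖ +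
              ‖Complex.exp (Complex.I * t * ξ (act g x)) -
                Complex.exp (Complex.I * t * ξ (act g y))‖ * ‖f (act g y)‖ := by
              rw [norm_mul, norm_mul, hexp1, one_mul]
          _ ≤ M₁ * (Real.sqrt (c g) * δ g ^ 2) * Real.sqrt (dist x y) * pl x * pl y +
              2 * Real.sqrt C * Real.sqrt |t| * M₂ *
                (Real.sqrt (c g) * δ g ^ 2) * Real.sqrt (dist x y) * pl x * pl y :=
              add_le_add ht1 ht2
          _ = Real.sqrt (c g) * δ g ^ 2 * K := by rw [hK]; ring
      calc ‖∫ g, (Complex.exp (Complex.I * t * ξ (act g x)) * f (act g x) -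
          Complex.exp (Complex.I * t * ξ (act g y)) * f (act g y)) ∂π‖
          ≤ ∫ g, Real.sqrt (c g) * δ g ^ 2 * K ∂π :=
            norm_integral_le_of_norm_le (hAint.mul_const K) (Filter.Eventually.of_forall hbound)
        _ = (∫ g, Real.sqrt (c g) * δ g ^ 2 ∂π) * K := integral_mul_const _ _
        _ = A * K := by rw [← hA]
        _ = (A * M₁ + 2 * A * Real.sqrt C * Real.sqrt |t| * M₂) *
              Real.sqrt (dist x y) * pl x * pl y := by rw [hK]; ring
  refine ⟨?_, claim2⟩
  intro x y
  rcases le_total (pl y) (pl x) with h | h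
  · exact key x y h
  · have := key y x h
    calc ‖Qt t f x - Qt t f y‖ = ‖Qt t f y - Qt t f x‖ := norm_sub_rev _ _
      _ ≤ (A * M₁ + 2 * A * Real.sqrt C * Real.sqrt |t| * M₂) *
            Real.sqrt (dist y x) * pl y * pl x := this
      _ = (A * M₁ + 2 * A * Real.sqrt C * Real.sqrt |t| * M₂) *
            Real.sqrt (dist x y) * pl x * pl y := by rw [dist_comm]; ring
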